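/- The set {(ℓ, k) ∈ ℕ × ℕ : 1 ≤ ℓ ∧ ℓ ≤ 2^(k+1)} is not a semilinear subset of ℕ². -/

import Mathlib

/-- A subset of `ℕ^d` (indexed by `ι`) is linear if it is
`{b + a₁x₁ + ⋯ + a_m x_m : aᵢ ∈ ℕ}` for some base `b` and periods `xᵢ`. -/
def IsLinearSetNat {ι : Type*} (S : Set (ι → ℕ)) : Prop :=
  ∃ (b : ι → ℕ) (m : ℕ) (x : Fin m → ι → ℕ),
    S = {v | ∃ a : Fin m → ℕ, v = b + ∑ i, a i • x i}

/-- A subset of `ℕ^d` is semilinear if it is a finite union of linear sets. -/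
def IsSemilinearSetNat {ι : Type*} (S : Set (ι → ℕ)) : Prop :=
  ∃ (k : ℕ) (L : Fin k → Set (ι → ℕ)),
    (∀ i, IsLinearSetNat (L i)) ∧ S = ⋃ i, L i

lemma two_pow_aux (k : ℕ) : k * (k + 1) + 2 ≤ 2 ^ (k + 1) := by
  induction k with
  | zero => norm_num
  | succ n ih =>
    have h : n ≤ n * n := by
      rcases Nat.eq_zero_or_pos n with h | h
      · simp [h]
      · exact Nat.le_mul_of_pos_left n h
    calc (n + 1) * (n + 2) + 2 ≤ 2 * (n * (n + 1) + 2) := by nlinarith [h]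
    _ ≤ 2 * 2 ^ (n + 1) := by omega
    _ = 2 ^ (n + 2) := by ring

lemma lin_lt_pow (a b k : ℕ) (h : a + b ≤ k) : a + b * k < 2 ^ (k + 1) := by
  have h1 : a + b * k ≤ (a + b) * (k + 1) := by nlinarith
  have h2 : (a + b) * (k + 1) ≤ k * (k + 1) := Nat.mul_le_mul_right _ h
  have h3 := two_pow_aux k
  omega

/-- The set `{(ℓ, k) : 1 ≤ ℓ ∧ ℓ ≤ 2^(k+1)}` is not semilinear. -/
theorem not_semilinear_pow :
    ¬ IsSemilinearSetNat {v : Fin 2 → ℕ | 1 ≤ v 0 ∧ v 0 ≤ 2 ^ (v 1 + 1)} := by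
  rintro ⟨N, L, hlin, hS⟩
  have hv : ∀ k : ℕ, ∃ i, (![2 ^ (k + 1), k] : Fin 2 → ℕ) ∈ L i := by
    intro k
    have hmem : (![2 ^ (k + 1), k] : Fin 2 → ℕ) ∈
        {v : Fin 2 → ℕ | 1 ≤ v 0 ∧ v 0 ≤ 2 ^ (v 1 + 1)} := by
      constructor <;> simp [Nat.one_le_two_pow]
    rw [hS] at hmem
    exact Set.mem_iUnion.mp hmem
  choose g hg using hv
  obtain ⟨i, hi⟩ := Finite.exists_infinite_fiber g
  obtain ⟨b, m, x, hL⟩ := hlin i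
  have hmemS : ∀ v, v ∈ L i → 1 ≤ v 0 ∧ v 0 ≤ 2 ^ (v 1 + 1) := by
    intro v hv'
    have h : v ∈ ⋃ j, L j := Set.mem_iUnion.mpr ⟨i, hv'⟩
    rw [← hS] at h
    exact h
  by_cases hx : ∃ j, x j 1 = 0 ∧ 0 < x j 0
  · obtain ⟨j, hj1, hj0⟩ := hx
    set p := 2 ^ (b 1 + 1) with hp
    set n := p + 1 with hn
    have hw : (b + ∑ t, (fun t => if t = j then n else 0) t • x t) ∈ L i := by
      rw [hL]; exact ⟨_, rfl⟩
    have hsum : ∑ t, (fun t => if t = j then n else 0) t • x t = n • x j := by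
      simp [ite_smul]
    rw [hsum] at hw
    have hc := hmemS _ hw
    have h0 : (b + n • x j) 0 = b 0 + n * x j 0 := by simp
    have h1 : (b + n • x j) 1 = b 1 + n * x j 1 := by simp
    rw [h0, h1, hj1, Nat.mul_zero, Nat.add_zero] at hc
    have hge : n ≤ n * x j 0 := Nat.le_mul_of_pos_right n hj0
    have : n ≤ p := le_trans hge (le_trans (Nat.le_add_left _ _) hc.2)
    omega
  · push_neg at hx
    set C := ∑ j, x j 0 with hC
    have hbound : ∀ j, x j 0 ≤ C * x j 1 := by
      intro j
      rcases Nat.eq_zero_or_pos (x j 1) with h | h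
      · have := hx j h; omega
      · have h1 : x j 0 ≤ C := Finset.single_le_sum
          (fun t _ => Nat.zero_le (x t 0)) (Finset.mem_univ j)
        calc x j 0 ≤ C := h1
        _ = C * 1 := (mul_one C).symm
        _ ≤ C * x j 1 := Nat.mul_le_mul_left C h
    have hT : (g ⁻¹' {i}).Infinite := Set.infinite_coe_iff.mp hi
    obtain ⟨k, hk, hk2'⟩ := hT.exists_notMem_finite (Set.finite_Iic (b 0 + C))
    have hk2 : b 0 + C < k := by simpa [Set.mem_Iic] using hk2'
    have hk' : g k = i := hk
    have hmem : (![2 ^ (k + 1), k] : Fin 2 → ℕ) ∈ L i := by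
      have h := hg k; rwa [hk'] at h
    rw [hL] at hmem
    obtain ⟨a, ha⟩ := hmem
    have h0 : (2 : ℕ) ^ (k + 1) = b 0 + ∑ t, a t * x t 0 := by
      have := congrFun ha 0; simpa using this
    have h1 : k = b 1 + ∑ t, a t * x t 1 := by
      have := congrFun ha 1; simpa using this
    have hle : ∑ t, a t * x t 0 ≤ C * ∑ t, a t * x t 1 := by
      rw [Finset.mul_sum]
      apply Finset.sum_le_sum
      intro t _
      calc a t * x t 0 ≤ a t * (C * x t 1) := Nat.mul_le_mul_left _ (hbound t)
      _ = C * (a t * x t 1) := by ring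
    have hle2 : C * ∑ t, a t * x t 1 ≤ C * k := by
      apply Nat.mul_le_mul_left
      omega
    have hbig : 2 ^ (k + 1) ≤ b 0 + C * k := by omega
    have := lin_lt_pow (b 0) C k (le_of_lt hk2)
    omega
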